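/- (PD controller / optimistic mirror descent.) In the CMD setup with weights λ_0 = 1, λ_1 = −α_D where 0 ≤ α_D < 1, and λ_i = 0 for i = 2, …, T−1, suppose ‖g_t‖ ≤ G₁ and ‖z_t‖ ≤ G₂ for all t. Then for every μ ∈ U: ∑_{t=1}^T (w_t(μ_t) − w_t(μ)) ≤ η T G₂² / (2σ(1−α_D)) + V(μ, μ_1)/(η(1−α_D)) + √2 · G₁ G₂ T η / (σ(1−α_D)). -/

import Mathlib

open scoped RealInnerProductSpace
open scoped RealInnerProductSpace

-- derivative at boundary minimum is nonneg
lemma aux_deriv_nonneg {φ : ℝ → ℝ} {D : ℝ} (hφ : HasDerivAt φ D 0)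
    (hmin : ∀ s ∈ Set.Ioo (0:ℝ) 1, φ 0 ≤ φ s) : 0 ≤ D := by
  have hs : Filter.Tendsto (slope φ 0) (nhdsWithin 0 (Set.Ioi 0)) (nhds D) :=
    (hasDerivAt_iff_tendsto_slope.mp hφ).mono_left
      (nhdsWithin_mono _ (fun x hx => ne_of_gt hx))
  refine ge_of_tendsto hs ?_
  filter_upwards [Ioo_mem_nhdsGT_of_mem (by constructor <;> norm_num : (0:ℝ) ∈ Set.Ico 0 1)]
    with s hsm
  rw [slope_def_field]
  have := hmin s hsm
  have hspos : 0 < s := hsm.1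
  apply div_nonneg (by linarith) (by linarith)
open scoped RealInnerProductSpace

lemma aux_np_lower (m : ℕ) (np : EuclideanSpace ℝ (Fin m) → ℝ)
    (hnp_nonneg : ∀ u, 0 ≤ np u)
    (hnp_zero : ∀ u, np u = 0 ↔ u = 0)
    (hnp_smul : ∀ (r : ℝ) u, np (r • u) = |r| * np u)
    (hnp_add : ∀ u v, np (u + v) ≤ np u + np v) :
    ∃ c > 0, ∀ y, c * ‖y‖ ≤ np y := by
  classical
  have np0 : np 0 = 0 := (hnp_zero 0).mpr rfl
  -- upper bound: np v ≤ K * ‖v‖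
  obtain ⟨K, hK0, hKup⟩ : ∃ K, 0 ≤ K ∧ ∀ v : EuclideanSpace ℝ (Fin m), np v ≤ K * ‖v‖ := by
    refine ⟨∑ i : Fin m, np (EuclideanSpace.single i (1:ℝ)),
      Finset.sum_nonneg (fun i _ => hnp_nonneg _), fun v => ?_⟩
    have hdecomp : v = ∑ i : Fin m, (v i) • EuclideanSpace.single i (1:ℝ) := by
      ext j
      rw [WithLp.ofLp_sum, Finset.sum_apply]
      simp [EuclideanSpace.single_apply, PiLp.smul_apply, Finset.sum_ite_eq', mul_one]
    have hsum : ∀ (s : Finset (Fin m)) (f : Fin m → EuclideanSpace ℝ (Fin m)),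
        np (∑ i ∈ s, f i) ≤ ∑ i ∈ s, np (f i) := by
      intro s f
      induction s using Finset.cons_induction with
      | empty => simp [np0]
      | cons a s ha ih =>
        rw [Finset.sum_cons, Finset.sum_cons]
        exact le_trans (hnp_add _ _) (by linarith)
    calc np v ≤ ∑ i : Fin m, np ((v i) • EuclideanSpace.single i (1:ℝ)) := by
          conv_lhs => rw [hdecomp]
          exact hsum _ _
      _ ≤ ∑ i : Fin m, np (EuclideanSpace.single i (1:ℝ)) * ‖v‖ := by
          refine Finset.sum_le_sum (fun i _ => ?_)
          rw [hnp_smul]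
          have h1 : |v i| ≤ ‖v‖ := by
            have := abs_real_inner_le_norm (EuclideanSpace.single i (1:ℝ)) v
            simpa [EuclideanSpace.inner_single_left, EuclideanSpace.norm_single] using this
          have := hnp_nonneg (EuclideanSpace.single i (1:ℝ))
          calc |v i| * np (EuclideanSpace.single i (1:ℝ))
              ≤ ‖v‖ * np (EuclideanSpace.single i (1:ℝ)) := by
                exact mul_le_mul_of_nonneg_right h1 this
            _ = np (EuclideanSpace.single i (1:ℝ)) * ‖v‖ := mul_comm _ _
      _ = (∑ i : Fin m, np (EuclideanSpace.single i (1:ℝ))) * ‖v‖ := by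
          rw [Finset.sum_mul]
  -- continuity
  have hcont : Continuous np := by
    have : LipschitzWith (Real.toNNReal K) np := by
      refine LipschitzWith.of_dist_le_mul (fun x y => ?_)
      have h1 : np x - np y ≤ np (x - y) := by
        have := hnp_add (x - y) y
        simp only [sub_add_cancel] at this
        linarith
      have h2 : np y - np x ≤ np (x - y) := by
        have := hnp_add (y - x) x
        simp only [sub_add_cancel] at this
        have hneg : np (y - x) = np (x - y) := by
          have hx := hnp_smul (-1) (y - x)
          simp only [neg_one_smul, neg_sub, abs_neg, abs_one, one_mul] at hx
          linarith
        linarith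
      have h3 : np (x - y) ≤ K * ‖x - y‖ := hKup _
      rw [Real.dist_eq, Real.coe_toNNReal K hK0, dist_eq_norm]
      rw [abs_sub_le_iff]
      constructor <;> linarith
    exact this.continuous
  by_cases hsp : (Metric.sphere (0:EuclideanSpace ℝ (Fin m)) 1).Nonempty
  · obtain ⟨y₀, hy₀mem, hmin⟩ :=
      (isCompact_sphere (0:EuclideanSpace ℝ (Fin m)) 1).exists_isMinOn hsp hcont.continuousOn
    have hy₀norm : ‖y₀‖ = 1 := by simpa using hy₀mem
    have hy₀ne : y₀ ≠ 0 := by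
      intro hh; rw [hh] at hy₀norm; simp at hy₀norm
    have hc : 0 < np y₀ := by
      rcases lt_or_eq_of_le (hnp_nonneg y₀) with h | h
      · exact h
      · exact absurd ((hnp_zero y₀).mp h.symm) hy₀ne
    refine ⟨np y₀, hc, fun y => ?_⟩
    by_cases hy : y = 0
    · simp [hy, np0]
    · have hyn : 0 < ‖y‖ := norm_pos_iff.mpr hy
      have hu : (‖y‖⁻¹ • y) ∈ Metric.sphere (0:EuclideanSpace ℝ (Fin m)) 1 := by
        simp only [mem_sphere_iff_norm, sub_zero, norm_smul, norm_inv, norm_norm]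
        field_simp
      have h2 : np y₀ ≤ np (‖y‖⁻¹ • y) := hmin hu
      have heq : np (‖y‖⁻¹ • y) = ‖y‖⁻¹ * np y := by
        rw [hnp_smul]; congr 1
        rw [abs_of_pos (inv_pos.mpr hyn)]
      rw [heq] at h2
      have h3 : np y₀ * ‖y‖ ≤ (‖y‖⁻¹ * np y) * ‖y‖ :=
        mul_le_mul_of_nonneg_right h2 (le_of_lt hyn)
      calc np y₀ * ‖y‖ ≤ (‖y‖⁻¹ * np y) * ‖y‖ := h3
        _ = np y := by field_simp
  · refine ⟨1, one_pos, fun y => ?_⟩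
    by_cases hy : y = 0
    · simp [hy, np0]
    · exfalso
      apply hsp
      have hyn : 0 < ‖y‖ := norm_pos_iff.mpr hy
      refine ⟨‖y‖⁻¹ • y, ?_⟩
      simp only [mem_sphere_iff_norm, sub_zero, norm_smul, norm_inv, norm_norm]
      field_simp

lemma aux_telescope (c Vv : ℕ → ℝ) (hc0 : ∀ s, 0 ≤ c s) (hcd : ∀ s, c (s+1) ≤ c s)
    (hVn : ∀ s, 0 ≤ Vv s) :
    ∀ N, 1 ≤ N → ∑ s ∈ Finset.Icc 1 N, c s * (Vv s - Vv (s+1))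
      ≤ c 1 * Vv 1 - c N * Vv (N+1) := by
  intro N hN
  induction N, hN using Nat.le_induction with
  | base => simp [Finset.Icc_self]; ring_nf; simp [mul_sub]
  | succ n hn ih =>
    rw [Finset.sum_Icc_succ_top (by omega)]
    have h1 : c (n+1) * Vv (n+1) ≤ c n * Vv (n+1) :=
      mul_le_mul_of_nonneg_right (hcd n) (hVn _)
    have hexp : c (n+1) * (Vv (n+1) - Vv (n+2)) = c (n+1)*Vv (n+1) - c (n+1)*Vv (n+2) := by
      ring
    have : (n + 1) + 1 = n + 2 := rfl
    rw [hexp]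
    linarith [ih]

set_option maxHeartbeats 4000000 in

/-- (PD controller / optimistic mirror descent.) With weights `λ_0 = 1`,
`λ_1 = −α_D` (`0 ≤ α_D < 1`) and `λ_i = 0` for `i ≥ 2`, CMD satisfies the stated
regret bound. -/
theorem pd_controller_regret (m T : ℕ) (hT : 1 ≤ T)
    (np nd : EuclideanSpace ℝ (Fin m) → ℝ)
    (hnp_nonneg : ∀ u, 0 ≤ np u)
    (hnp_zero : ∀ u, np u = 0 ↔ u = 0)
    (hnp_smul : ∀ (r : ℝ) u, np (r • u) = |r| * np u)
    (hnp_add : ∀ u v, np (u + v) ≤ np u + np v)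
    (hnd : ∀ u, nd u = sSup {r : ℝ | ∃ y, np y ≤ 1 ∧ r = ⟪u, y⟫})
    (σ : ℝ) (hσ : 0 < σ)
    (h : EuclideanSpace ℝ (Fin m) → ℝ)
    (gradh : EuclideanSpace ℝ (Fin m) → EuclideanSpace ℝ (Fin m))
    (hdiff : ∀ v, HasGradientAt h (gradh v) v)
    (hstrong : ∀ u v, h v + ⟪gradh v, u - v⟫ + σ / 2 * (nd (u - v)) ^ 2 ≤ h u)
    (V : EuclideanSpace ℝ (Fin m) → EuclideanSpace ℝ (Fin m) → ℝ)
    (hV : ∀ x y, V x y = h x - h y - ⟪gradh y, x - y⟫)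
    (U : Set (EuclideanSpace ℝ (Fin m)))
    (hU_ne : U.Nonempty) (hU_cl : IsClosed U) (hU_cvx : Convex ℝ U)
    (η : ℝ) (hη : 0 < η)
    (lam : ℕ → ℝ)
    (w : ℕ → EuclideanSpace ℝ (Fin m) → ℝ)
    (hw_convex : ∀ t ∈ Finset.Icc 1 T, ConvexOn ℝ Set.univ (w t))
    (μ : ℕ → EuclideanSpace ℝ (Fin m))
    (g z : ℕ → EuclideanSpace ℝ (Fin m))
    (hμ1 : μ 1 ∈ U)
    (hsubgrad : ∀ t ∈ Finset.Icc 1 T, ∀ u,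
      w t (μ t) + ⟪g t, u - μ t⟫ ≤ w t u)
    (hz : ∀ t ∈ Finset.Icc 1 T, z t = ∑ s ∈ Finset.Icc 1 t, lam (t - s) • g s)
    (hupdate : ∀ t ∈ Finset.Icc 1 T, μ (t + 1) ∈ U ∧
      ∀ u ∈ U, ⟪z t, μ (t + 1)⟫ + (1 / η) * V (μ (t + 1)) (μ t)
        ≤ ⟪z t, u⟫ + (1 / η) * V u (μ t))
    (htilde : ∀ t ∈ Finset.Icc 1 T, ∃ ν, gradh ν = gradh (μ t) - η • z t)
    (αD : ℝ) (hαD0 : 0 ≤ αD) (hαD1 : αD < 1)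
    (hlam0 : lam 0 = 1)
    (hlam1 : lam 1 = -αD)
    (hlam : ∀ i, 2 ≤ i → i ≤ T - 1 → lam i = 0)
    (G₁ G₂ : ℝ)
    (hG1 : ∀ t ∈ Finset.Icc 1 T, np (g t) ≤ G₁)
    (hG2 : ∀ t ∈ Finset.Icc 1 T, np (z t) ≤ G₂)
    (μbar : EuclideanSpace ℝ (Fin m)) (hμbar : μbar ∈ U) :
    ∑ t ∈ Finset.Icc 1 T, (w t (μ t) - w t μbar) ≤
      η * (T : ℝ) * G₂ ^ 2 / (2 * σ * (1 - αD))
        + V μbar (μ 1) / (η * (1 - αD))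
        + Real.sqrt 2 * G₁ * G₂ * (T : ℝ) * η / (σ * (1 - αD)) := by
  classical
  have h1α : 0 < 1 - αD := by linarith
  have np0 : np 0 = 0 := (hnp_zero 0).mpr rfl
  obtain ⟨c₀, hc₀pos, hc₀low⟩ := aux_np_lower m np hnp_nonneg hnp_zero hnp_smul hnp_add
  -- basic facts about nd
  have bddS : ∀ u : EuclideanSpace ℝ (Fin m),
      BddAbove {r : ℝ | ∃ y, np y ≤ 1 ∧ r = ⟪u, y⟫} := by
    intro u
    refine ⟨‖u‖ * (1/c₀), ?_⟩
    rintro r ⟨y, hy, rfl⟩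
    have h1 : ⟪u, y⟫ ≤ ‖u‖ * ‖y‖ := real_inner_le_norm u y
    have h2 : ‖y‖ ≤ 1/c₀ := by
      have := hc₀low y
      rw [le_div_iff₀ hc₀pos, mul_comm]
      linarith
    calc ⟪u, y⟫ ≤ ‖u‖ * ‖y‖ := h1
      _ ≤ ‖u‖ * (1/c₀) := mul_le_mul_of_nonneg_left h2 (norm_nonneg u)
  have nd_nonneg : ∀ u, 0 ≤ nd u := by
    intro u
    rw [hnd]
    exact le_csSup (bddS u) ⟨0, by simp [np0]⟩
  have pairing : ∀ (a x : EuclideanSpace ℝ (Fin m)), ⟪a, x⟫ ≤ np a * nd x := by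
    intro a x
    by_cases ha : np a = 0
    · have ha0 : a = 0 := (hnp_zero a).mp ha
      rw [ha0, ha0] at *
      simp [np0]
    · have hapos : 0 < np a := lt_of_le_of_ne (hnp_nonneg a) (Ne.symm ha)
      have hmem : ⟪x, (np a)⁻¹ • a⟫ ∈ {r : ℝ | ∃ y, np y ≤ 1 ∧ r = ⟪x, y⟫} := by
        refine ⟨(np a)⁻¹ • a, ?_, rfl⟩
        rw [hnp_smul, abs_of_pos (inv_pos.mpr hapos), inv_mul_cancel₀ ha]
      have hle : ⟪x, (np a)⁻¹ • a⟫ ≤ nd x := by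
        rw [hnd]; exact le_csSup (bddS x) hmem
      have heq : ⟪x, (np a)⁻¹ • a⟫ = (np a)⁻¹ * ⟪a, x⟫ := by
        rw [real_inner_smul_right, real_inner_comm]
      rw [heq] at hle
      have := mul_le_mul_of_nonneg_left hle (le_of_lt hapos)
      rw [← mul_assoc, mul_inv_cancel₀ ha, one_mul] at this
      exact this
  have nd_sub_comm : ∀ (a b : EuclideanSpace ℝ (Fin m)), nd (a - b) = nd (b - a) := by
    have nd_neg : ∀ u : EuclideanSpace ℝ (Fin m), nd (-u) = nd u := by
      intro u
      rw [hnd, hnd]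
      congr 1
      ext r
      have hnpneg : ∀ y : EuclideanSpace ℝ (Fin m), np (-y) = np y := by
        intro y
        simpa using hnp_smul (-1) y
      constructor
      · rintro ⟨y, hy, rfl⟩
        exact ⟨-y, by rw [hnpneg]; exact hy, by simp⟩
      · rintro ⟨y, hy, rfl⟩
        exact ⟨-y, by rw [hnpneg]; exact hy, by simp⟩
    intro a b
    rw [← neg_sub b a, nd_neg]
  have Vlow : ∀ x y, σ/2 * (nd (x - y))^2 ≤ V x y := by
    intro x y
    rw [hV]
    have := hstrong x y
    linarith
  have Vnonneg : ∀ x y, 0 ≤ V x y := by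
    intro x y
    refine le_trans ?_ (Vlow x y)
    have := sq_nonneg (nd (x - y))
    nlinarith
  have strongmono : ∀ u v, σ * (nd (u - v))^2 ≤ ⟪gradh u - gradh v, u - v⟫ := by
    intro u v
    have h1 := hstrong u v
    have h2 := hstrong v u
    rw [nd_sub_comm v u] at h2
    have e1 : ⟪gradh u - gradh v, u - v⟫ = ⟪gradh u, u - v⟫ - ⟪gradh v, u - v⟫ :=
      inner_sub_left _ _ _
    have e2 : ⟪gradh u, v - u⟫ = -⟪gradh u, u - v⟫ := by
      rw [← neg_sub u v, inner_neg_right]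
    rw [e2] at h2
    linarith
  have μmem : ∀ t, 1 ≤ t → t ≤ T + 1 → μ t ∈ U := by
    intro t h1 h2
    match t, h1 with
    | 1, _ => exact hμ1
    | (k+2), _ =>
      exact (hupdate (k+1) (Finset.mem_Icc.mpr ⟨by omega, by omega⟩)).1
  -- first order optimality
  have foc : ∀ t ∈ Finset.Icc 1 T, ∀ u ∈ U,
      0 ≤ η * ⟪z t, u - μ (t+1)⟫ + ⟪gradh (μ (t+1)) - gradh (μ t), u - μ (t+1)⟫ := by
    intro t ht u hu
    have hx : μ (t+1) ∈ U := (hupdate t ht).1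
    set x := μ (t+1) with hxdef
    set p := μ t with hpdef
    set d := u - x with hddef
    set φ : ℝ → ℝ := fun s => η * ⟪z t, x + s • d⟫ + (h (x + s • d) - ⟪gradh p, x + s • d⟫)
      with hφdef
    have hγ0 : x + (0:ℝ) • d = x := by simp
    have hline : ∀ s₀ : ℝ, HasDerivAt (fun s : ℝ => x + s • d) d s₀ := by
      intro s₀
      simpa using ((hasDerivAt_id s₀).smul_const d).const_add x
    have h1 : HasDerivAt (fun s : ℝ => ⟪z t, x + s • d⟫) ⟪z t, d⟫ 0 := by
      have := ((innerSL ℝ (z t)).hasFDerivAt (x := x + (0:ℝ) • d)).comp_hasDerivAt 0 (hline 0)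
      simpa [Function.comp_def] using this
    have h3 : HasDerivAt (fun s : ℝ => ⟪gradh p, x + s • d⟫) ⟪gradh p, d⟫ 0 := by
      have := ((innerSL ℝ (gradh p)).hasFDerivAt (x := x + (0:ℝ) • d)).comp_hasDerivAt 0 (hline 0)
      simpa [Function.comp_def] using this
    have h2 : HasDerivAt (fun s : ℝ => h (x + s • d)) ⟪gradh x, d⟫ 0 := by
      have hg : HasFDerivAt h (InnerProductSpace.toDual ℝ _ (gradh x)) ((fun s : ℝ => x + s • d) 0) := by
        simpa [hγ0] using (hdiff x).hasFDerivAt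
      have := hg.comp_hasDerivAt 0 (hline 0)
      simpa [InnerProductSpace.toDual_apply_apply, Function.comp_def] using this
    have hder : HasDerivAt φ (η * ⟪z t, d⟫ + (⟪gradh x, d⟫ - ⟪gradh p, d⟫)) 0 :=
      (h1.const_mul η).add (h2.sub h3)
    have hmin : ∀ s ∈ Set.Ioo (0:ℝ) 1, φ 0 ≤ φ s := by
      intro s hs
      have hγU : x + s • d ∈ U := by
        have hcomb := hU_cvx hx hu (by linarith [hs.2] : (0:ℝ) ≤ 1 - s) (le_of_lt hs.1)
          (by ring)
        have heq : x + s • d = (1 - s) • x + s • u := by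
          rw [hddef, smul_sub, sub_smul, one_smul]
          abel
        rw [heq]
        exact hcomb
      have hup := (hupdate t ht).2 _ hγU
      have hup2 : η * ⟪z t, x⟫ + V x p ≤ η * ⟪z t, x + s • d⟫ + V (x + s • d) p := by
        have h0 := mul_le_mul_of_nonneg_left hup hη.le
        have e1 : η * (⟪z t, x⟫ + 1/η * V x p) = η * ⟪z t, x⟫ + V x p := by
          field_simp
        have e2 : η * (⟪z t, x + s • d⟫ + 1/η * V (x + s • d) p)
            = η * ⟪z t, x + s • d⟫ + V (x + s • d) p := by
          field_simp
        rw [e1, e2] at h0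
        exact h0
      have hexp : ∀ y : EuclideanSpace ℝ (Fin m),
          ⟪gradh p, y - p⟫ = ⟪gradh p, y⟫ - ⟪gradh p, p⟫ := fun y => inner_sub_right _ _ _
      rw [hV, hV, hexp, hexp] at hup2
      simp only [hφdef, hγ0]
      linarith
    have hD := aux_deriv_nonneg hder hmin
    have e3 : ⟪gradh x - gradh p, d⟫ = ⟪gradh x, d⟫ - ⟪gradh p, d⟫ := inner_sub_left _ _ _
    rw [e3]
    linarith
  -- three point inequality
  have threept : ∀ t ∈ Finset.Icc 1 T, ∀ u ∈ U,
      η * ⟪z t, μ (t+1) - u⟫ ≤ V u (μ t) - V u (μ (t+1)) - V (μ (t+1)) (μ t) := by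
    intro t ht u hu
    have hf := foc t ht u hu
    rw [hV, hV, hV]
    simp only [inner_sub_left, inner_sub_right] at hf ⊢
    linarith
  have G2nn : 0 ≤ G₂ :=
    le_trans (hnp_nonneg (z 1)) (hG2 1 (Finset.mem_Icc.mpr ⟨le_refl 1, hT⟩))
  have G1nn : 0 ≤ G₁ :=
    le_trans (hnp_nonneg (g 1)) (hG1 1 (Finset.mem_Icc.mpr ⟨le_refl 1, hT⟩))
  -- step bound
  have stepbd : ∀ t ∈ Finset.Icc 1 T, nd (μ (t+1) - μ t) ≤ η * G₂ / σ := by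
    intro t ht
    have htmem := Finset.mem_Icc.mp ht
    have hpU : μ t ∈ U := μmem t htmem.1 (by omega)
    have hf := foc t ht (μ t) hpU
    have hmono := strongmono (μ (t+1)) (μ t)
    have hpair := pairing (z t) (μ t - μ (t+1))
    have hndeq : nd (μ t - μ (t+1)) = nd (μ (t+1) - μ t) := nd_sub_comm _ _
    have hzbd := hG2 t ht
    have hN0 : 0 ≤ nd (μ (t+1) - μ t) := nd_nonneg _
    have hinneg : ⟪gradh (μ (t+1)) - gradh (μ t), μ t - μ (t+1)⟫
        = -⟪gradh (μ (t+1)) - gradh (μ t), μ (t+1) - μ t⟫ := by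
      rw [← neg_sub (μ (t+1)) (μ t), inner_neg_right]
    rw [hinneg] at hf
    have hzN : ⟪z t, μ t - μ (t+1)⟫ ≤ G₂ * nd (μ (t+1) - μ t) := by
      rw [hndeq] at hpair
      calc ⟪z t, μ t - μ (t+1)⟫ ≤ np (z t) * nd (μ (t+1) - μ t) := hpair
        _ ≤ G₂ * nd (μ (t+1) - μ t) := mul_le_mul_of_nonneg_right hzbd hN0
    have hkey : σ * (nd (μ (t+1) - μ t))^2 ≤ η * (G₂ * nd (μ (t+1) - μ t)) := by
      have h5 : η * ⟪z t, μ t - μ (t+1)⟫ ≤ η * (G₂ * nd (μ (t+1) - μ t)) :=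
        mul_le_mul_of_nonneg_left hzN hη.le
      linarith
    rcases eq_or_lt_of_le hN0 with hNz | hNp
    · rw [← hNz]
      positivity
    · rw [le_div_iff₀ hσ]
      have := (mul_le_mul_iff_of_pos_right hNp).mp (by nlinarith : (nd (μ (t+1) - μ t) * σ) * nd (μ (t+1) - μ t) ≤ (η * G₂) * nd (μ (t+1) - μ t))
      linarith
  -- per-step bound on ⟪z s, μ s - μbar⟫
  have ebound : ∀ s ∈ Finset.Icc 1 T,
      ⟪z s, μ s - μbar⟫ ≤ η * G₂^2 / (2*σ)
        + (V μbar (μ s) - V μbar (μ (s+1))) / η := by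
    intro s hs
    have h3 := threept s hs μbar hμbar
    have hVl := Vlow (μ (s+1)) (μ s)
    have hpair := pairing (z s) (μ s - μ (s+1))
    have hzbd := hG2 s hs
    set N := nd (μ (s+1) - μ s) with hNdef
    have hndeq : nd (μ s - μ (s+1)) = N := nd_sub_comm _ _
    have hN0 : 0 ≤ N := nd_nonneg _
    have hsplit : ⟪z s, μ s - μbar⟫
        = ⟪z s, μ s - μ (s+1)⟫ + ⟪z s, μ (s+1) - μbar⟫ := by
      rw [← inner_add_right]
      congr 1
      abel
    have hfirst : ⟪z s, μ s - μ (s+1)⟫ ≤ G₂ * N := by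
      rw [hndeq] at hpair
      calc ⟪z s, μ s - μ (s+1)⟫ ≤ np (z s) * N := hpair
        _ ≤ G₂ * N := mul_le_mul_of_nonneg_right hzbd hN0
    have hsecond : ⟪z s, μ (s+1) - μbar⟫
        ≤ (V μbar (μ s) - V μbar (μ (s+1)) - V (μ (s+1)) (μ s)) / η := by
      rw [le_div_iff₀ hη, mul_comm]
      exact h3
    have hVlN : σ/2 * N^2 / η ≤ V (μ (s+1)) (μ s) / η :=
      (div_le_div_iff_of_pos_right hη).mpr hVl
    have hquad : G₂ * N - σ/2 * N^2 / η ≤ η * G₂^2 / (2*σ) := by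
      rw [sub_le_iff_le_add,
        show η * G₂^2/(2*σ) + σ/2*N^2/η = (η^2*G₂^2 + σ^2*N^2)/(2*σ*η) by field_simp,
        le_div_iff₀ (by positivity)]
      nlinarith [sq_nonneg (σ*N - η*G₂)]
    have hdsplit : (V μbar (μ s) - V μbar (μ (s+1)) - V (μ (s+1)) (μ s)) / η
        = (V μbar (μ s) - V μbar (μ (s+1)))/η - V (μ (s+1)) (μ s)/η := by
      ring
    rw [hsplit]
    rw [hdsplit] at hsecond
    linarith
  -- z in terms of g
  have hz1 : z 1 = g 1 := by
    have := hz 1 (Finset.mem_Icc.mpr ⟨le_refl 1, hT⟩)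
    simpa [Finset.Icc_self, hlam0] using this
  have hzrec : ∀ t, 2 ≤ t → t ≤ T → g t = z t + αD • g (t-1) := by
    intro t h2 hles
    have hzt := hz t (Finset.mem_Icc.mpr ⟨by omega, hles⟩)
    have hsplit : ∑ s ∈ Finset.Icc 1 t, lam (t-s) • g s
        = ∑ s ∈ Finset.Ico 1 (t-1), lam (t-s) • g s
          + ∑ s ∈ Finset.Ico (t-1) (t+1), lam (t-s) • g s := by
      rw [← Finset.Ico_add_one_right_eq_Icc,
        Finset.sum_Ico_consecutive _ (by omega : 1 ≤ t-1) (by omega : t-1 ≤ t+1)]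
    have hzero : ∑ s ∈ Finset.Ico 1 (t-1), lam (t-s) • g s = 0 := by
      apply Finset.sum_eq_zero
      intro s hsm
      have hsb := Finset.mem_Ico.mp hsm
      rw [hlam (t-s) (by omega) (by omega), zero_smul]
    have hset : Finset.Ico (t-1) (t+1) = {t-1, t} := by
      ext a
      simp only [Finset.mem_Ico, Finset.mem_insert, Finset.mem_singleton]
      omega
    have hlast : ∑ s ∈ Finset.Ico (t-1) (t+1), lam (t-s) • g s
        = (-αD) • g (t-1) + g t := by
      rw [hset, Finset.sum_insert (by simp; omega), Finset.sum_singleton,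
        show t - (t-1) = 1 by omega, show t - t = 0 by omega, hlam0, hlam1, one_smul]
    rw [hsplit, hzero, hlast, zero_add] at hzt
    rw [hzt]
    module
  -- cross term bound
  have across : ∀ t, 2 ≤ t → t ≤ T → ⟪g (t-1), μ t - μ (t-1)⟫ ≤ G₁ * G₂ * η / σ := by
    intro t h2 hle
    have ht1 : t - 1 ∈ Finset.Icc 1 T := Finset.mem_Icc.mpr ⟨by omega, by omega⟩
    have hp := pairing (g (t-1)) (μ t - μ (t-1))
    have hstep := stepbd (t-1) ht1
    rw [show t - 1 + 1 = t by omega] at hstep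
    have hgbd := hG1 (t-1) ht1
    have hN0 : 0 ≤ nd (μ t - μ (t-1)) := nd_nonneg _
    calc ⟪g (t-1), μ t - μ (t-1)⟫ ≤ np (g (t-1)) * nd (μ t - μ (t-1)) := hp
      _ ≤ G₁ * (η * G₂ / σ) := by
          apply mul_le_mul hgbd hstep hN0 G1nn
      _ = G₁ * G₂ * η / σ := by ring
  have hκ0 : 0 ≤ G₁ * G₂ * η / σ := by positivity
  set F : ℕ → ℝ := fun s => ⟪z s, μ s - μbar⟫ + αD * (G₁ * G₂ * η / σ) with hFdef
  -- key induction
  have akey : ∀ t, 1 ≤ t → t ≤ T →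
      ⟪g t, μ t - μbar⟫ ≤ ∑ s ∈ Finset.Icc 1 t, αD^(t-s) * F s := by
    intro t h1 hles
    induction t, h1 using Nat.le_induction with
    | base =>
      rw [Finset.Icc_self, Finset.sum_singleton]
      simp only [Nat.sub_self, pow_zero, one_mul, hFdef]
      rw [← hz1]
      nlinarith [mul_le_mul_of_nonneg_left hκ0 hαD0]
    | succ n hn ih =>
      have hnT : n ≤ T := by omega
      have ihn := ih hnT
      have hrec := hzrec (n+1) (by omega) hles
      rw [show n + 1 - 1 = n by omega] at hrec
      have hexp : ⟪g (n+1), μ (n+1) - μbar⟫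
          = ⟪z (n+1), μ (n+1) - μbar⟫ + αD * ⟪g n, μ (n+1) - μbar⟫ := by
        rw [hrec, inner_add_left, real_inner_smul_left]
      have hgsplit : ⟪g n, μ (n+1) - μbar⟫
          = ⟪g n, μ n - μbar⟫ + ⟪g n, μ (n+1) - μ n⟫ := by
        rw [← inner_add_right]
        congr 1
        abel
      have hcross := across (n+1) (by omega) hles
      rw [show n + 1 - 1 = n by omega] at hcross
      have hsum : ∑ s ∈ Finset.Icc 1 (n+1), αD^(n+1-s) * F s
          = F (n+1) + αD * ∑ s ∈ Finset.Icc 1 n, αD^(n-s) * F s := by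
        rw [Finset.sum_Icc_succ_top (by omega : 1 ≤ n + 1),
          show n + 1 - (n+1) = 0 by omega, pow_zero, one_mul, Finset.mul_sum, add_comm]
        congr 1
        apply Finset.sum_congr rfl
        intro s hsm
        have := (Finset.mem_Icc.mp hsm).2
        rw [show n + 1 - s = (n - s) + 1 by omega, pow_succ]
        ring
      rw [hsum, hexp, hgsplit]
      have hmul : αD * (⟪g n, μ n - μbar⟫ + ⟪g n, μ (n+1) - μ n⟫)
          ≤ αD * ((∑ s ∈ Finset.Icc 1 n, αD^(n-s) * F s) + G₁ * G₂ * η / σ) := by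
        apply mul_le_mul_of_nonneg_left _ hαD0
        linarith
      simp only [hFdef]
      nlinarith [hmul]
  -- regret per step
  have hregret : ∀ t ∈ Finset.Icc 1 T, w t (μ t) - w t μbar ≤ ⟪g t, μ t - μbar⟫ := by
    intro t ht
    have := hsubgrad t ht μbar
    have hneg : ⟪g t, μbar - μ t⟫ = -⟪g t, μ t - μbar⟫ := by
      rw [← neg_sub (μ t) μbar, inner_neg_right]
    rw [hneg] at this
    linarith
  -- the coefficient function
  set cc : ℕ → ℝ := fun s => ∑ t ∈ Finset.Icc s T, αD^(t-s) with hccdef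
  have hcform : ∀ s, cc s = ∑ k ∈ Finset.range (T+1-s), αD^k := by
    intro s
    simp only [hccdef]
    rw [← Finset.Ico_add_one_right_eq_Icc, Finset.sum_Ico_eq_sum_range]
    apply Finset.sum_congr rfl
    intro k hk
    congr 1
    omega
  have hc0 : ∀ s, 0 ≤ cc s := by
    intro s
    rw [hcform]
    exact Finset.sum_nonneg (fun k _ => pow_nonneg hαD0 k)
  have hcub : ∀ s, cc s ≤ 1/(1-αD) := by
    intro s
    rw [hcform, geom_sum_eq (ne_of_lt hαD1)]
    rw [show (αD^(T+1-s) - 1)/(αD - 1) = (1 - αD^(T+1-s))/(1-αD) by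
      rw [div_eq_div_iff (by linarith) (by linarith)]; ring]
    rw [div_le_div_iff₀ h1α h1α]
    nlinarith [pow_nonneg hαD0 (T+1-s)]
  have hcdec : ∀ s, cc (s+1) ≤ cc s := by
    intro s
    rw [hcform, hcform]
    apply Finset.sum_le_sum_of_subset_of_nonneg
    · apply Finset.range_subset_range.mpr
      omega
    · intro k _ _
      exact pow_nonneg hαD0 k
  -- sum swap
  have hswap : ∑ t ∈ Finset.Icc 1 T, ∑ s ∈ Finset.Icc 1 t, αD^(t-s) * F s
      = ∑ s ∈ Finset.Icc 1 T, cc s * F s := by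
    have hcomm := Finset.sum_Ico_Ico_comm 1 (T+1) (fun s t => αD^(t-s) * F s)
    simp only [Finset.Ico_add_one_right_eq_Icc] at hcomm
    rw [← hcomm]
    apply Finset.sum_congr rfl
    intro s hs
    rw [show cc s = ∑ t ∈ Finset.Icc s T, αD^(t-s) from rfl, Finset.sum_mul]
  -- main chain
  have hchain : ∑ t ∈ Finset.Icc 1 T, (w t (μ t) - w t μbar)
      ≤ ∑ s ∈ Finset.Icc 1 T, cc s * F s := by
    rw [← hswap]
    apply Finset.sum_le_sum
    intro t ht
    have htm := Finset.mem_Icc.mp ht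
    exact le_trans (hregret t ht) (akey t htm.1 htm.2)
  -- bound each cc s * F s
  set B' : ℝ := η * G₂^2 / (2*σ) + αD * (G₁ * G₂ * η / σ) with hB'def
  have hB'0 : 0 ≤ B' := by
    have : 0 ≤ αD * (G₁ * G₂ * η / σ) := mul_nonneg hαD0 hκ0
    have : 0 ≤ η * G₂^2 / (2*σ) := by positivity
    simp only [hB'def]
    linarith [mul_nonneg hαD0 hκ0]
  have hFbd : ∀ s ∈ Finset.Icc 1 T,
      F s ≤ B' + (V μbar (μ s) - V μbar (μ (s+1))) / η := by
    intro s hs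
    have := ebound s hs
    simp only [hFdef, hB'def]
    linarith
  have hccF : ∑ s ∈ Finset.Icc 1 T, cc s * F s
      ≤ (∑ s ∈ Finset.Icc 1 T, cc s * B')
        + (1/η) * ∑ s ∈ Finset.Icc 1 T, cc s * (V μbar (μ s) - V μbar (μ (s+1))) := by
    rw [Finset.mul_sum, ← Finset.sum_add_distrib]
    apply Finset.sum_le_sum
    intro s hs
    have h1 := mul_le_mul_of_nonneg_left (hFbd s hs) (hc0 s)
    have e1 : cc s * (B' + (V μbar (μ s) - V μbar (μ (s+1))) / η)
        = cc s * B' + 1/η * (cc s * (V μbar (μ s) - V μbar (μ (s+1)))) := by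
      field_simp
    linarith [e1 ▸ h1]
  have htel : ∑ s ∈ Finset.Icc 1 T, cc s * (V μbar (μ s) - V μbar (μ (s+1)))
      ≤ (1/(1-αD)) * V μbar (μ 1) := by
    have := aux_telescope cc (fun s => V μbar (μ s)) hc0 hcdec
      (fun s => Vnonneg _ _) T hT
    have h2 : 0 ≤ cc T * V μbar (μ (T+1)) := mul_nonneg (hc0 T) (Vnonneg _ _)
    have h3 : cc 1 * V μbar (μ 1) ≤ (1/(1-αD)) * V μbar (μ 1) :=
      mul_le_mul_of_nonneg_right (hcub 1) (Vnonneg _ _)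
    linarith
  have hconst : ∑ s ∈ Finset.Icc 1 T, cc s * B' ≤ (T : ℝ) * (1/(1-αD)) * B' := by
    calc ∑ s ∈ Finset.Icc 1 T, cc s * B' ≤ ∑ s ∈ Finset.Icc 1 T, (1/(1-αD)) * B' := by
          apply Finset.sum_le_sum
          intro s _
          exact mul_le_mul_of_nonneg_right (hcub s) hB'0
      _ = (T : ℝ) * (1/(1-αD)) * B' := by
          rw [Finset.sum_const, Nat.card_Icc]
          simp only [nsmul_eq_mul]
          rw [show T + 1 - 1 = T by omega]
          ring
  -- final algebra
  have hsqrt2 : (1:ℝ) ≤ Real.sqrt 2 := by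
    rw [show (1:ℝ) = Real.sqrt 1 from (Real.sqrt_one).symm]
    exact Real.sqrt_le_sqrt (by norm_num)
  have e1 : (T : ℝ) * (1/(1-αD)) * B'
      = η * (T : ℝ) * G₂^2 / (2*σ*(1-αD)) + αD * (G₁*G₂*(T : ℝ)*η/(σ*(1-αD))) := by
    simp only [hB'def]
    field_simp
  have e2 : (1/η) * ((1/(1-αD)) * V μbar (μ 1)) = V μbar (μ 1) / (η*(1-αD)) := by
    field_simp
  have e3 : αD * (G₁*G₂*(T : ℝ)*η/(σ*(1-αD)))
      ≤ Real.sqrt 2 * G₁ * G₂ * (T : ℝ) * η / (σ*(1-αD)) := by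
    have hQ : 0 ≤ G₁*G₂*(T : ℝ)*η/(σ*(1-αD)) := by positivity
    calc αD * (G₁*G₂*(T : ℝ)*η/(σ*(1-αD))) ≤ 1 * (G₁*G₂*(T : ℝ)*η/(σ*(1-αD))) :=
          mul_le_mul_of_nonneg_right (by linarith) hQ
      _ ≤ Real.sqrt 2 * (G₁*G₂*(T : ℝ)*η/(σ*(1-αD))) :=
          mul_le_mul_of_nonneg_right hsqrt2 hQ
      _ = Real.sqrt 2 * G₁ * G₂ * (T : ℝ) * η / (σ*(1-αD)) := by ring
  have htel2 : (1/η) * ∑ s ∈ Finset.Icc 1 T, cc s * (V μbar (μ s) - V μbar (μ (s+1)))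
      ≤ (1/η) * ((1/(1-αD)) * V μbar (μ 1)) :=
    mul_le_mul_of_nonneg_left htel (by positivity)
  calc ∑ t ∈ Finset.Icc 1 T, (w t (μ t) - w t μbar)
      ≤ ∑ s ∈ Finset.Icc 1 T, cc s * F s := hchain
    _ ≤ (∑ s ∈ Finset.Icc 1 T, cc s * B')
        + (1/η) * ∑ s ∈ Finset.Icc 1 T, cc s * (V μbar (μ s) - V μbar (μ (s+1))) := hccF
    _ ≤ (T : ℝ) * (1/(1-αD)) * B' + (1/η) * ((1/(1-αD)) * V μbar (μ 1)) := by
        linarith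
    _ ≤ η * (T : ℝ) * G₂ ^ 2 / (2 * σ * (1 - αD))
        + V μbar (μ 1) / (η * (1 - αD))
        + Real.sqrt 2 * G₁ * G₂ * (T : ℝ) * η / (σ * (1 - αD)) := by
        rw [e1, e2]
        linarith
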